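/- arXiv:1203.1235 — 4 statements merged into one kernel-verified Lean document; each statement's English description precedes it below -/
import Mathlib

section
/- For every countable ordinal ξ, if g is a finite strictly increasing partial function from ω₁ to ω₁ with ξ in its domain, rank(g(ζ), g(ζ)) ≥ ζ for every ζ in the domain of g, and ξ₀ = max(dom(g) ∩ ξ) exists, then there is a strictly increasing continuous function h : [ξ₀, ξ] → [g(ξ₀), g(ξ)] with h(ξ₀) = g(ξ₀) and h(ξ) = g(ξ). -/
noncomputable section

open Set

/-- The first uncountable ordinal. -/
def omega1 : Ordinal := (Cardinal.aleph 1).ord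

/-- `δ` is a limit point of the set of ordinals `X`. -/
def IsLimitPointOf (X : Set Ordinal) (δ : Ordinal) : Prop :=
  ∀ β < δ, ∃ ε ∈ X, β < ε ∧ ε < δ

/-- `rankGE X δ μ` says that the Cantor–Bendixson rank of `δ` with respect to `X`
is at least `μ`:  `rank(X, δ) ≥ 1` iff `δ` is a limit point of `X`, and for `μ > 1`,
`rank(X, δ) ≥ μ` iff for every `η < μ`, `δ` is a limit of ordinals `ε` with
`rank(X, ε) ≥ η`. -/
def rankGE (X : Set Ordinal) (δ μ : Ordinal) : Prop :=
  ∀ η : Ordinal, η < μ →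
    ((η = 0 → IsLimitPointOf X δ) ∧
     (η ≠ 0 → ∀ β < δ, ∃ ε, β < ε ∧ ε < δ ∧ rankGE X ε η))
termination_by μ
decreasing_by assumption

/-- A club (closed unbounded) subset of `ω₁`. -/
def IsClubW1 (C : Set Ordinal) : Prop :=
  C ⊆ Set.Iio omega1 ∧ (∀ α < omega1, ∃ β ∈ C, α < β) ∧
    (∀ δ, δ < omega1 → IsLimitPointOf C δ → δ ∈ C)

/-- A ladder system on `ω₁`: each countable limit ordinal `δ` gets a cofinal subset
`A δ ⊆ δ` of order type `ω`. -/
def IsLadder (A : Ordinal → Set Ordinal) : Prop :=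
  ∀ δ, δ < omega1 → Order.IsSuccLimit δ →
    A δ ⊆ Set.Iio δ ∧ (∀ β < δ, ∃ γ ∈ A δ, β < γ) ∧ (A δ).Infinite ∧
      ∀ x < δ, (A δ ∩ Set.Iio x).Finite

/-- A normal (strictly increasing and continuous) function on the ordinals below `ω₁`. -/
def IsNormalW1 (F : Ordinal → Ordinal) : Prop :=
  (∀ α, α < omega1 → F α < omega1) ∧
  (∀ α β, α < β → β < omega1 → F α < F β) ∧
  (∀ δ, δ < omega1 → Order.IsSuccLimit δ → F δ = sSup (F '' Set.Iio δ))

/-- An (additively) indecomposable nonzero ordinal. -/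
def Indecomposable (δ : Ordinal) : Prop :=
  0 < δ ∧ ∀ β < δ, ∀ γ < δ, β + γ < δ


universe u v

namespace Stmt1Aux
open Ordinal

lemma sSup_eq_of {S : Set Ordinal} {m : Ordinal} (hne : S.Nonempty)
    (hub : ∀ x ∈ S, x ≤ m) (hcof : ∀ β < m, ∃ x ∈ S, β < x) : sSup S = m := by
  refine le_antisymm (csSup_le hne hub) ?_
  by_contra h'
  push_neg at h'
  obtain ⟨x, hx, hbx⟩ := hcof _ h'
  exact absurd (le_csSup ⟨m, fun y hy => hub y hy⟩ hx) (not_le.2 hbx)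

lemma dvd_of_cofinal {a s : Ordinal}
    (h : ∀ β < s, ∃ ε, β < ε ∧ ε ≤ s ∧ a ∣ ε) : a ∣ s := by
  rcases eq_or_ne s 0 with rfl | hs
  · exact dvd_zero a
  have ha : a ≠ 0 := by
    obtain ⟨ε, hε0, _, hdvd⟩ := h 0 (pos_iff_ne_zero.2 hs)
    rintro rfl
    rw [zero_dvd_iff] at hdvd
    exact absurd hdvd hε0.ne'
  rw [Ordinal.dvd_iff_mod_eq_zero]
  by_contra hm
  have h1 : a * (s / a) < s := by
    conv_rhs => rw [← Ordinal.div_add_mod s a]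
    exact lt_add_of_pos_right _ (pos_iff_ne_zero.2 hm)
  obtain ⟨ε, h2, h3, k, rfl⟩ := h _ h1
  have hk : s / a < k := (mul_lt_mul_iff_right₀ (pos_iff_ne_zero.2 ha)).1 h2
  have h4 : a * (s / a) + a ≤ a * k := by
    rw [← mul_succ]
    exact (mul_le_mul_iff_right₀ (pos_iff_ne_zero.2 ha)).2 (Order.succ_le_of_lt hk)
  have h5 : s < a * k := by
    calc s = a * (s / a) + s % a := (Ordinal.div_add_mod s a).symm
    _ < a * (s / a) + a := add_lt_add_right (Ordinal.mod_lt s ha) _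
    _ ≤ a * k := h4
  exact absurd h3 (not_le.2 h5)

lemma opow_dvd_of_limit {ζ s : Ordinal} (hζ : Order.IsSuccLimit ζ)
    (h : ∀ ζ' < ζ, omega0 ^ ζ' ∣ s) : omega0 ^ ζ ∣ s := by
  rcases eq_or_ne s 0 with rfl | hs
  · exact dvd_zero _
  rw [Ordinal.dvd_iff_mod_eq_zero]
  by_contra hm
  have hlt : s % omega0 ^ ζ < omega0 ^ ζ := Ordinal.mod_lt s (opow_ne_zero ζ omega0_ne_zero)
  obtain ⟨ζ', hζ', hmlt⟩ := (lt_opow_of_isSuccLimit omega0_ne_zero hζ).1 hlt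
  have hd1 : omega0 ^ ζ' ∣ omega0 ^ ζ * (s / omega0 ^ ζ) :=
    (opow_dvd_opow _ hζ'.le).mul_right _
  have hd2 : omega0 ^ ζ' ∣ s % omega0 ^ ζ :=
    (Ordinal.dvd_add_iff hd1).1 (by rw [Ordinal.div_add_mod]; exact h ζ' hζ')
  exact absurd (Ordinal.le_of_dvd hm hd2) (not_le.2 hmlt)

/-- least multiple of `ω^ζ` strictly greater than `r`. -/
def Lm (r ζ : Ordinal) : Ordinal := omega0 ^ ζ * (r / omega0 ^ ζ + 1)

lemma opow_pos' (ζ : Ordinal) : (0:Ordinal) < omega0 ^ ζ := opow_pos ζ omega0_pos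

lemma lt_Lm (r ζ : Ordinal) : r < Lm r ζ := by
  calc r = omega0 ^ ζ * (r / omega0 ^ ζ) + r % omega0 ^ ζ := (Ordinal.div_add_mod r _).symm
  _ < omega0 ^ ζ * (r / omega0 ^ ζ) + omega0 ^ ζ :=
      add_lt_add_right (Ordinal.mod_lt r (opow_ne_zero _ omega0_ne_zero)) _
  _ = Lm r ζ := by rw [Lm, mul_add, mul_one]

lemma dvd_Lm (r ζ : Ordinal) : omega0 ^ ζ ∣ Lm r ζ := ⟨_, rfl⟩

lemma Lm_le {r ζ m : Ordinal} (hd : omega0 ^ ζ ∣ m) (hm : r < m) : Lm r ζ ≤ m := by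
  obtain ⟨k, rfl⟩ := hd
  have hk : r / omega0 ^ ζ < k := by
    by_contra hk
    push_neg at hk
    have h1 : omega0 ^ ζ * k ≤ omega0 ^ ζ * (r / omega0 ^ ζ) :=
      (mul_le_mul_iff_right₀ (opow_pos' ζ)).2 hk
    exact absurd hm (not_lt.2 (h1.trans (Ordinal.mul_div_le r _)))
  rw [Lm]
  rw [← Order.succ_le_iff] at hk
  exact (mul_le_mul_iff_right₀ (opow_pos' ζ)).2 (by rwa [add_one_eq_succ])

lemma not_dvd_Lm {ζ ζ' : Ordinal} (h : ζ < ζ') (r : Ordinal) : ¬ omega0 ^ ζ' ∣ Lm r ζ := by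
  rintro ⟨k, hk⟩
  rw [Lm] at hk
  have h1 : omega0 ^ ζ' = omega0 ^ ζ * omega0 ^ (ζ' - ζ) := by
    rw [← opow_add, Ordinal.add_sub_cancel_of_le h.le]
  rw [h1, mul_assoc] at hk
  have h2 : r / omega0 ^ ζ + 1 = omega0 ^ (ζ' - ζ) * k :=
    le_antisymm ((mul_le_mul_iff_right₀ (opow_pos' ζ)).1 hk.le)
      ((mul_le_mul_iff_right₀ (opow_pos' ζ)).1 hk.ge)
  have hω : omega0 ∣ omega0 ^ (ζ' - ζ) * k := by
    have h3 : (1:Ordinal) ≤ ζ' - ζ := by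
      rw [Ordinal.one_le_iff_ne_zero]
      intro h4
      rw [Ordinal.sub_eq_zero_iff_le] at h4
      exact absurd h4 (not_le.2 h)
    have h6 : omega0 ∣ omega0 ^ (ζ' - ζ) := by simpa using opow_dvd_opow omega0 h3
    exact h6.mul_right k
  rw [← h2] at hω
  have h5 : Order.IsSuccLimit (r / omega0 ^ ζ + 1) :=
    Ordinal.isSuccLimit_iff_omega0_dvd.2 ⟨by rw [add_one_eq_succ]; exact Ordinal.succ_ne_zero _, hω⟩
  rw [add_one_eq_succ] at h5
  exact absurd (h5.succ_lt (Order.lt_succ _)) (lt_irrefl _)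

lemma Lm_lt_Lm {ζ ζ' : Ordinal} (r : Ordinal) (h : ζ < ζ') : Lm r ζ < Lm r ζ' := by
  have hle : Lm r ζ ≤ Lm r ζ' :=
    Lm_le ((opow_dvd_opow _ h.le).trans (dvd_Lm r ζ')) (lt_Lm r ζ')
  rcases hle.lt_or_eq with h' | h'
  · exact h'
  · exact absurd (h' ▸ dvd_Lm r ζ') (not_dvd_Lm h r)

lemma Lm_le_Lm {ζ ζ' : Ordinal} (r : Ordinal) (h : ζ ≤ ζ') : Lm r ζ ≤ Lm r ζ' := by
  rcases h.lt_or_eq with h' | rfl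
  · exact (Lm_lt_Lm r h').le
  · exact le_rfl

lemma Lm_limit {r μ : Ordinal} (hμ : Order.IsSuccLimit μ) {β : Ordinal} (hβ : β < Lm r μ) :
    ∃ ζ < μ, β < Lm r ζ := by
  by_contra hcon
  push_neg at hcon
  set S : Set Ordinal := Lm r '' Set.Iio μ with hS
  have hne : S.Nonempty := ⟨Lm r 0, ⟨0, hμ.pos, rfl⟩⟩
  have hbdd : BddAbove S := by
    refine ⟨β, ?_⟩
    rintro x ⟨ζ, hζ, rfl⟩
    exact hcon ζ hζ
  have hrs : r < sSup S := lt_of_lt_of_le (lt_Lm r 0) (le_csSup hbdd ⟨0, hμ.pos, rfl⟩)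
  have hdvd : omega0 ^ μ ∣ sSup S := by
    apply opow_dvd_of_limit hμ
    intro ζ' hζ'
    apply dvd_of_cofinal
    intro γ hγ
    obtain ⟨x, ⟨ζ₁, hζ₁, rfl⟩, hγx⟩ := exists_lt_of_lt_csSup hne hγ
    refine ⟨Lm r (max ζ₁ ζ'), lt_of_lt_of_le hγx (Lm_le_Lm r (le_max_left _ _)), ?_, ?_⟩
    · exact le_csSup hbdd ⟨max ζ₁ ζ', max_lt hζ₁ hζ', rfl⟩
    · exact (opow_dvd_opow _ (le_max_right _ _)).trans (dvd_Lm r _)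
  have : Lm r μ ≤ sSup S := Lm_le hdvd hrs
  have : Lm r μ ≤ β := this.trans (csSup_le hne (by rintro x ⟨ζ, hζ, rfl⟩; exact hcon ζ hζ))
  exact absurd hβ (not_lt.2 this)

lemma exists_seq {lam x₀ : Ordinal} (hc : lam < omega1) (hlim : Order.IsSuccLimit lam)
    (hx : x₀ < lam) :
    ∃ z : ℕ → Ordinal, z 0 = x₀ ∧ (∀ n, z n < z (n + 1)) ∧ (∀ n, z n < lam) ∧
      ∀ β < lam, ∃ n, β < z n := by
  have hcard : lam.card ≤ Cardinal.aleph0 := by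
    have h2 := Cardinal.lt_ord.1 hc
    rwa [← Cardinal.succ_aleph0, Order.lt_succ_iff] at h2
  have hcount : Countable lam.ToType := by
    rw [← Cardinal.mk_le_aleph0_iff, Cardinal.mk_toType]; exact hcard
  have hne : Nonempty lam.ToType := Ordinal.nonempty_toType_iff.2 hlim.pos.ne'
  obtain ⟨f', hf'⟩ := exists_surjective_nat lam.ToType
  set f : ℕ → Ordinal := fun n => (((Ordinal.ToType.mk (o := lam))).symm (f' n) : Set.Iio lam).1
    with hf
  have hflt : ∀ n, f n < lam := fun n => (((Ordinal.ToType.mk (o := lam))).symm (f' n)).2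
  have hfall : ∀ β < lam, ∃ n, f n = β := by
    intro β hβ
    obtain ⟨n, hn⟩ := hf' ((Ordinal.ToType.mk (o := lam)) ⟨β, hβ⟩)
    refine ⟨n, ?_⟩
    rw [hf]
    simp only [hn, OrderIso.symm_apply_apply]
  set z : ℕ → Ordinal := fun n => Nat.rec x₀ (fun m zm => max zm (f m) + 1) n with hz
  have hz0 : z 0 = x₀ := rfl
  have hzsucc : ∀ n, z (n + 1) = max (z n) (f n) + 1 := fun n => rfl
  have hzs : ∀ n, z n < z (n + 1) := fun n => by
    rw [hzsucc]; exact lt_of_le_of_lt (le_max_left _ _) (lt_add_one _)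
  have hzlt : ∀ n, z n < lam := by
    intro n
    induction n with
    | zero => exact hx
    | succ m ih =>
      rw [hzsucc, add_one_eq_succ]
      exact hlim.succ_lt (max_lt ih (hflt m))
  refine ⟨z, hz0, hzs, hzlt, fun β hβ => ?_⟩
  obtain ⟨n, hn⟩ := hfall β hβ
  exact ⟨n + 1, by rw [hzsucc]; exact lt_of_le_of_lt (hn ▸ le_max_right _ _) (lt_add_one _)⟩

lemma rank_dvd (μ : Ordinal.{u}) : ∀ δ' δ : Ordinal.{v}, δ ≤ δ' → rankGE (Set.Iio δ') δ μ →
    ∀ η < μ, omega0 ^ (Ordinal.lift.{v} η + 1) ∣ Ordinal.lift.{u} δ := by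
  induction μ using Ordinal.induction with
  | _ μ IH =>
  intro δ' δ hδδ' hrank η hη
  unfold rankGE at hrank
  obtain ⟨h0, h1⟩ := hrank η hη
  rcases eq_or_ne δ 0 with rfl | hδ0
  · simp
  rcases eq_or_ne η 0 with rfl | hη0
  · have hlim : Order.IsSuccLimit δ := by
      refine Ordinal.isSuccLimit_iff.2 ⟨hδ0, Order.isSuccPrelimit_of_succ_lt fun a ha => ?_⟩
      obtain ⟨ε, _, hlt1, hlt2⟩ := h0 rfl a ha
      exact lt_of_le_of_lt (Order.succ_le_of_lt hlt1) hlt2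
    have hlim' : Order.IsSuccLimit (Ordinal.lift.{u} δ) := Ordinal.isSuccLimit_lift.2 hlim
    have h2 := (Ordinal.isSuccLimit_iff_omega0_dvd.1 hlim').2
    simpa using h2
  · have hcof : ∀ β < δ, ∃ ε, β < ε ∧ ε < δ ∧
        omega0 ^ (Ordinal.lift.{v} η) ∣ Ordinal.lift.{u} ε := by
      intro β hβ
      obtain ⟨ε, hβε, hεδ, hr⟩ := h1 hη0 β hβ
      refine ⟨ε, hβε, hεδ, ?_⟩
      have hdvds : ∀ η' < η, omega0 ^ (Ordinal.lift.{v} η' + 1) ∣ Ordinal.lift.{u} ε :=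
        fun η' hη' => IH η hη δ' ε (le_of_lt (lt_of_lt_of_le hεδ hδδ')) hr η' hη'
      rcases Ordinal.zero_or_succ_or_isSuccLimit η with rfl | ⟨ρ, rfl⟩ | hl
      · exact absurd rfl hη0
      · have h3 := hdvds ρ (Order.lt_succ ρ)
        rw [Ordinal.lift_succ, ← add_one_eq_succ]
        exact h3
      · refine opow_dvd_of_limit (Ordinal.isSuccLimit_lift.2 hl) fun ρ hρ => ?_
        obtain ⟨η'', hη''⟩ := Ordinal.mem_range_lift_of_le hρ.le
        have hη''η : η'' < η := by
          rw [← Ordinal.lift_lt.{v,u}]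
          rw [hη'']
          exact hρ
        rw [← hη'']
        exact dvd_trans
          (opow_dvd_opow _ (le_self_add)) (hdvds η'' hη''η)
    obtain ⟨k, hk⟩ : omega0 ^ (Ordinal.lift.{v} η) ∣ Ordinal.lift.{u} δ := by
      apply dvd_of_cofinal
      intro β hβ
      obtain ⟨β', rfl⟩ := Ordinal.mem_range_lift_of_le hβ.le
      obtain ⟨ε, h2, h3, h4⟩ := hcof β' (Ordinal.lift_lt.1 hβ)
      exact ⟨Ordinal.lift.{u} ε, Ordinal.lift_lt.2 h2, Ordinal.lift_le.2 h3.le, h4⟩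
    have hk0 : k ≠ 0 := by
      rintro rfl
      rw [mul_zero] at hk
      exact hδ0 (Ordinal.lift_inj.1 (by rw [hk, Ordinal.lift_zero]))
    have hklim : Order.IsSuccLimit k := by
      refine Ordinal.isSuccLimit_iff.2 ⟨hk0, Order.isSuccPrelimit_of_succ_lt fun j hj => ?_⟩
      by_contra hns
      push_neg at hns
      have hkj : k = j + 1 := by
        rw [add_one_eq_succ]
        exact le_antisymm hns (Order.succ_le_of_lt hj)
      have hβlt : omega0 ^ (Ordinal.lift.{v} η) * j < Ordinal.lift.{u} δ := by
        rw [hk, hkj]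
        exact (mul_lt_mul_iff_right₀ (opow_pos' _)).2 (lt_add_one j)
      obtain ⟨β', hβ'⟩ := Ordinal.mem_range_lift_of_le hβlt.le
      obtain ⟨ε, h2, h3, m, hm⟩ := hcof β' (Ordinal.lift_lt.1 (hβ' ▸ hβlt))
      have h2' : omega0 ^ (Ordinal.lift.{v} η) * j < omega0 ^ (Ordinal.lift.{v} η) * m := by
        rw [← hβ', ← hm]
        exact Ordinal.lift_lt.2 h2
      have h3' : omega0 ^ (Ordinal.lift.{v} η) * m <
          omega0 ^ (Ordinal.lift.{v} η) * (j + 1) := by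
        rw [← hm, ← hkj, ← hk]
        exact Ordinal.lift_lt.2 h3
      have hm1 : j < m := (mul_lt_mul_iff_right₀ (opow_pos' _)).1 h2'
      have hm2 : m < j + 1 := (mul_lt_mul_iff_right₀ (opow_pos' _)).1 h3'
      rw [add_one_eq_succ, Order.lt_succ_iff] at hm2
      exact absurd hm1 (not_lt.2 hm2)
    obtain ⟨t, ht⟩ := (Ordinal.isSuccLimit_iff_omega0_dvd.1 hklim).2
    exact ⟨t, by rw [hk, ht, opow_add, opow_one, mul_assoc]⟩

lemma rank_opow_dvd {δ : Ordinal.{v}} {ξ : Ordinal.{u}} (hξ : ξ ≠ 0)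
    (h : rankGE (Set.Iio δ) δ ξ) :
    omega0 ^ Ordinal.lift.{v} ξ ∣ Ordinal.lift.{u} δ := by
  have H := rank_dvd ξ δ δ le_rfl h
  rcases Ordinal.zero_or_succ_or_isSuccLimit ξ with rfl | ⟨ρ, rfl⟩ | hl
  · exact absurd rfl hξ
  · have h2 := H ρ (Order.lt_succ ρ)
    rw [Ordinal.lift_succ, ← add_one_eq_succ]
    exact h2
  · refine opow_dvd_of_limit (Ordinal.isSuccLimit_lift.2 hl) fun ρ hρ => ?_
    obtain ⟨η', hη'⟩ := Ordinal.mem_range_lift_of_le hρ.le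
    have h2 : η' < ξ := by
      rw [← Ordinal.lift_lt.{v,u}]
      rw [hη']
      exact hρ
    rw [← hη']
    exact dvd_trans (opow_dvd_opow _ (le_self_add)) (H η' h2)

lemma lift_omega1 : Ordinal.lift.{v} omega1.{u} = omega1.{max u v} := by
  rw [omega1, omega1, Cardinal.lift_ord, Cardinal.lift_aleph, Ordinal.lift_one]

lemma key {ξ ξ₀ : Ordinal.{u}} {α δ : Ordinal.{max u v}}
    (hξc : ξ < omega1.{u}) (hδc : δ < omega1.{max u v})
    (hlt : ξ₀ < ξ) (hαδ : α < δ) (hdvd : omega0 ^ Ordinal.lift.{v} ξ ∣ δ) :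
    ∃ h : Ordinal.{u} → Ordinal.{max u v},
      (∀ ζ, ξ₀ ≤ ζ → ζ ≤ ξ → α ≤ h ζ ∧ h ζ ≤ δ) ∧
      (∀ ζ ζ', ξ₀ ≤ ζ → ζ < ζ' → ζ' ≤ ξ → h ζ < h ζ') ∧
      (∀ μ, ξ₀ < μ → μ ≤ ξ → Order.IsSuccLimit μ → ∀ β < h μ, ∃ ζ, ξ₀ ≤ ζ ∧ ζ < μ ∧ β < h ζ) ∧
      h ξ₀ = α ∧ h ξ = δ := by
  by_cases hA : Order.IsSuccLimit ξ ∧ Lm α (Ordinal.lift.{v} ξ) ≠ δ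
  case neg =>
    set h : Ordinal.{u} → Ordinal.{max u v} := fun ζ =>
      if ζ ≤ ξ₀ then α else if ζ < ξ then Lm α (Ordinal.lift.{v} ζ) else δ with hhdef
    have hint : ∀ ζ, ξ₀ < ζ → ζ < ξ → h ζ = Lm α (Ordinal.lift.{v} ζ) := by
      intro ζ h1 h2
      rw [hhdef]
      dsimp only
      rw [if_neg (not_le.2 h1), if_pos h2]
    have hhξ₀ : h ξ₀ = α := by rw [hhdef]; dsimp only; rw [if_pos le_rfl]
    have hhξ : h ξ = δ := by
      rw [hhdef]
      dsimp only
      rw [if_neg (not_le.2 hlt), if_neg (lt_irrefl ξ)]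
    have hLmlt : ∀ ζ < ξ, Lm α (Ordinal.lift.{v} ζ) < δ := by
      intro ζ hζ
      have hle : Lm α (Ordinal.lift.{v} ζ) ≤ δ :=
        Lm_le ((opow_dvd_opow _ (Ordinal.lift_le.2 hζ.le)).trans hdvd) hαδ
      rcases hle.lt_or_eq with h' | h'
      · exact h'
      · exfalso
        have hd : omega0 ^ (Ordinal.lift.{v} ζ + 1) ∣ δ := by
          refine (opow_dvd_opow _ ?_).trans hdvd
          rw [add_one_eq_succ, ← Ordinal.lift_succ]
          exact Ordinal.lift_le.2 (Order.succ_le_of_lt hζ)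
        rw [← h'] at hd
        exact not_dvd_Lm (lt_add_one _) α hd
    have hLμ : ∀ μ, ξ₀ < μ → μ ≤ ξ → Order.IsSuccLimit μ →
        h μ = Lm α (Ordinal.lift.{v} μ) := by
      intro μ h1 h2 hμlim
      rcases h2.lt_or_eq with h3 | rfl
      · exact hint μ h1 h3
      · rw [hhξ]
        by_contra h4
        exact hA ⟨hμlim, fun h5 => h4 h5.symm⟩
    have hbound : ∀ ζ, ξ₀ ≤ ζ → ζ ≤ ξ → α ≤ h ζ ∧ h ζ ≤ δ := by
      intro ζ h1 h2
      rcases le_or_gt ζ ξ₀ with h3 | h3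
      · rw [hhdef]; dsimp only; rw [if_pos h3]; exact ⟨le_rfl, hαδ.le⟩
      rcases h2.lt_or_eq with h4 | rfl
      · rw [hint ζ h3 h4]
        exact ⟨(lt_Lm α _).le, (hLmlt ζ h4).le⟩
      · rw [hhξ]; exact ⟨hαδ.le, le_rfl⟩
    have hmono : ∀ ζ ζ', ξ₀ ≤ ζ → ζ < ζ' → ζ' ≤ ξ → h ζ < h ζ' := by
      intro ζ ζ' h1 h2 h3
      have hζ'₀ : ξ₀ < ζ' := lt_of_le_of_lt h1 h2
      have hζ'v : α < h ζ' := by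
        rcases h3.lt_or_eq with h4 | rfl
        · rw [hint ζ' hζ'₀ h4]; exact lt_Lm α _
        · rw [hhξ]; exact hαδ
      rcases le_or_gt ζ ξ₀ with h5 | h5
      · have hζα : h ζ = α := by rw [hhdef]; dsimp only; rw [if_pos h5]
        rw [hζα]; exact hζ'v
      · have h6 : ζ < ξ := lt_of_lt_of_le h2 h3
        rw [hint ζ h5 h6]
        rcases h3.lt_or_eq with h4 | rfl
        · rw [hint ζ' hζ'₀ h4]; exact Lm_lt_Lm α (Ordinal.lift_lt.2 h2)
        · rw [hhξ]; exact hLmlt ζ h6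
    refine ⟨h, hbound, hmono, ?_, hhξ₀, hhξ⟩
    intro μ h1 h2 hμlim β hβ
    rw [hLμ μ h1 h2 hμlim] at hβ
    obtain ⟨ρ, hρμ, hβρ⟩ := Lm_limit (Ordinal.isSuccLimit_lift.2 hμlim) hβ
    obtain ⟨ζ, hζ⟩ := Ordinal.mem_range_lift_of_le hρμ.le
    have hζμ : ζ < μ := by
      rw [← Ordinal.lift_lt.{v,u}]
      rw [hζ]
      exact hρμ
    set ζ₂ := max ζ (ξ₀ + 1) with hζ₂
    have hζ₂μ : ζ₂ < μ := by
      apply max_lt hζμ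
      rw [add_one_eq_succ]
      exact hμlim.succ_lt h1
    have hξ₀ζ₂ : ξ₀ < ζ₂ := lt_of_lt_of_le (lt_add_one ξ₀) (le_max_right _ _)
    refine ⟨ζ₂, hξ₀ζ₂.le, hζ₂μ, ?_⟩
    rw [hint ζ₂ hξ₀ζ₂ (lt_of_lt_of_le hζ₂μ h2)]
    have hρζ₂ : ρ ≤ Ordinal.lift.{v} ζ₂ := by
      rw [← hζ]
      exact Ordinal.lift_le.2 (le_max_left _ _)
    exact lt_of_lt_of_le hβρ (Lm_le_Lm α hρζ₂)
  case pos =>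
    obtain ⟨hξlim, hLmne⟩ := hA
    have hLmlt : Lm α (Ordinal.lift.{v} ξ) < δ := lt_of_le_of_ne (Lm_le hdvd hαδ) hLmne
    obtain ⟨c, hc⟩ := hdvd
    set d := α / omega0 ^ (Ordinal.lift.{v} ξ) with hd
    have hd1 : d + 1 < c := by
      have h2 : omega0 ^ (Ordinal.lift.{v} ξ) * (d + 1) <
          omega0 ^ (Ordinal.lift.{v} ξ) * c := by rw [← hc]; exact hLmlt
      exact (mul_lt_mul_iff_right₀ (opow_pos' _)).1 h2
    obtain ⟨z, hz0, hzs, hzlt, hzcof⟩ := exists_seq hξc hξlim hlt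
    have hzmono : StrictMono z := strictMono_nat_of_lt_succ hzs
    obtain ⟨e, he0, hemono, helt, hecof⟩ :
        ∃ e : ℕ → Ordinal.{max u v}, α < omega0 ^ (Ordinal.lift.{v} ξ) * e 0 ∧ Monotone e ∧
          (∀ n, e n + 1 ≤ c) ∧
          ∀ β < δ, ∃ n, β < omega0 ^ (Ordinal.lift.{v} ξ) * e n +
            omega0 ^ (Ordinal.lift.{v} (z (n + 1))) := by
      rcases Ordinal.zero_or_succ_or_isSuccLimit c with rfl | ⟨c', rfl⟩ | hclim
      · exfalso; rw [hc, mul_zero] at hαδ; exact absurd hαδ ((zero_le (a := α)).not_gt)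
      · refine ⟨fun _ => c', ?_, monotone_const, fun n => by rw [add_one_eq_succ], ?_⟩
        · have h2 : d + 1 ≤ c' := by rwa [add_one_eq_succ, Order.lt_succ_iff] at hd1
          calc α < Lm α (Ordinal.lift.{v} ξ) := lt_Lm α _
          _ = omega0 ^ (Ordinal.lift.{v} ξ) * (d + 1) := rfl
          _ ≤ omega0 ^ (Ordinal.lift.{v} ξ) * c' :=
              (mul_le_mul_iff_right₀ (opow_pos' _)).2 h2
        · intro β hβ
          have hδeq : δ = omega0 ^ (Ordinal.lift.{v} ξ) * c' +
              omega0 ^ (Ordinal.lift.{v} ξ) := by rw [hc, mul_succ]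
          rcases lt_or_ge β (omega0 ^ (Ordinal.lift.{v} ξ) * c') with h4 | h4
          · exact ⟨0, lt_of_lt_of_le h4 (le_self_add)⟩
          · have hγ : β - omega0 ^ (Ordinal.lift.{v} ξ) * c' <
                omega0 ^ (Ordinal.lift.{v} ξ) := by
              rw [Ordinal.sub_lt_of_le h4, ← hδeq]; exact hβ
            obtain ⟨ρ, hρξ, hγρ⟩ := (lt_opow_of_isSuccLimit omega0_ne_zero
              (Ordinal.isSuccLimit_lift.2 hξlim)).1 hγ
            obtain ⟨ζ', hζ'⟩ := Ordinal.mem_range_lift_of_le hρξ.le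
            have hζ'ξ : ζ' < ξ := by
              rw [← Ordinal.lift_lt.{v,u}]
              rw [hζ']
              exact hρξ
            obtain ⟨m, hm⟩ := hzcof ζ' hζ'ξ
            refine ⟨m, ?_⟩
            calc β = omega0 ^ (Ordinal.lift.{v} ξ) * c' +
                  (β - omega0 ^ (Ordinal.lift.{v} ξ) * c') :=
                  (Ordinal.add_sub_cancel_of_le h4).symm
            _ < omega0 ^ (Ordinal.lift.{v} ξ) * c' +
                  omega0 ^ (Ordinal.lift.{v} (z (m + 1))) := by
                apply add_lt_add_right
                calc β - omega0 ^ (Ordinal.lift.{v} ξ) * c' < omega0 ^ ρ := hγρ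
                _ = omega0 ^ (Ordinal.lift.{v} ζ') := by rw [hζ']
                _ ≤ omega0 ^ (Ordinal.lift.{v} (z (m + 1))) :=
                    opow_le_opow_right omega0_pos (Ordinal.lift_le.2 ((hm.trans (hzs m)).le))
      · have hcc : c < omega1.{max u v} := by
          apply lt_of_le_of_lt _ hδc
          rw [hc]
          exact Ordinal.le_mul_right c (opow_pos' _)
        obtain ⟨e, he0', hes, helt', hecof'⟩ := exists_seq hcc hclim hd1
        refine ⟨e, ?_, (strictMono_nat_of_lt_succ hes).monotone, ?_, ?_⟩
        · calc α < Lm α (Ordinal.lift.{v} ξ) := lt_Lm α _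
          _ = omega0 ^ (Ordinal.lift.{v} ξ) * (d + 1) := rfl
          _ = omega0 ^ (Ordinal.lift.{v} ξ) * e 0 := by rw [he0']
        · intro n
          rw [add_one_eq_succ]
          exact Order.succ_le_of_lt (helt' n)
        · intro β hβ
          have h4 : β / omega0 ^ (Ordinal.lift.{v} ξ) < c := by
            rw [Ordinal.div_lt (opow_pos' _).ne', ← hc]; exact hβ
          obtain ⟨n, hn⟩ := hecof' _ h4
          refine ⟨n, ?_⟩
          calc β < Lm β (Ordinal.lift.{v} ξ) := lt_Lm β _
          _ = omega0 ^ (Ordinal.lift.{v} ξ) * (β / omega0 ^ (Ordinal.lift.{v} ξ) + 1) := rfl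
          _ ≤ omega0 ^ (Ordinal.lift.{v} ξ) * e n := by
              apply (mul_le_mul_iff_right₀ (opow_pos' _)).2
              rw [add_one_eq_succ]
              exact Order.succ_le_of_lt hn
          _ ≤ omega0 ^ (Ordinal.lift.{v} ξ) * e n +
                omega0 ^ (Ordinal.lift.{v} (z (n + 1))) := le_self_add
    classical
    have hex : ∀ ζ, ζ < ξ → ∃ n, ζ ≤ z (n + 1) := by
      intro ζ hζ
      obtain ⟨m, hm⟩ := hzcof ζ hζ
      exact ⟨m, (hm.trans (hzs m)).le⟩
    set N : Ordinal.{u} → ℕ := fun ζ => if hx : ∃ n, ζ ≤ z (n + 1) then Nat.find hx else 0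
      with hN
    have hNle : ∀ ζ, ζ < ξ → ζ ≤ z (N ζ + 1) := by
      intro ζ hζ
      rw [hN]
      simp only [dif_pos (hex ζ hζ)]
      exact Nat.find_spec (hex ζ hζ)
    have hNmin : ∀ ζ (hζ : ζ < ξ) (n : ℕ), ζ ≤ z (n + 1) → N ζ ≤ n := by
      intro ζ hζ n hn
      rw [hN]
      simp only [dif_pos (hex ζ hζ)]
      exact Nat.find_min' (hex ζ hζ) hn
    have hNgt : ∀ ζ, ξ₀ < ζ → ζ < ξ → z (N ζ) < ζ := by
      intro ζ h1 h2
      cases hNz : N ζ with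
      | zero => rw [hz0]; exact h1
      | succ n =>
        by_contra hcon
        push_neg at hcon
        have := hNmin ζ h2 n hcon
        omega
    have hNeq : ∀ (n : ℕ) ζ, ζ < ξ → z n < ζ → ζ ≤ z (n + 1) → N ζ = n := by
      intro n ζ h1 h2 h3
      have h4 : N ζ ≤ n := hNmin ζ h1 n h3
      rcases h4.lt_or_eq with h5 | h5
      · exfalso
        have h6 : z (N ζ + 1) ≤ z n := hzmono.monotone (by omega)
        exact absurd (lt_of_le_of_lt ((hNle ζ h1).trans h6) h2) (lt_irrefl ζ)
      · exact h5
    set h : Ordinal.{u} → Ordinal.{max u v} := fun ζ =>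
      if ζ ≤ ξ₀ then α else if ζ < ξ then
        omega0 ^ (Ordinal.lift.{v} ξ) * e (N ζ) + omega0 ^ (Ordinal.lift.{v} ζ) else δ
      with hhdef
    have hint : ∀ ζ, ξ₀ < ζ → ζ < ξ →
        h ζ = omega0 ^ (Ordinal.lift.{v} ξ) * e (N ζ) + omega0 ^ (Ordinal.lift.{v} ζ) := by
      intro ζ h1 h2
      rw [hhdef]
      dsimp only
      rw [if_neg (not_le.2 h1), if_pos h2]
    have hhξ₀ : h ξ₀ = α := by rw [hhdef]; dsimp only; rw [if_pos le_rfl]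
    have hhξ : h ξ = δ := by
      rw [hhdef]
      dsimp only
      rw [if_neg (not_le.2 hlt), if_neg (lt_irrefl ξ)]
    have hlt_δ : ∀ ζ, ξ₀ < ζ → ζ < ξ → h ζ < δ := by
      intro ζ h1 h2
      rw [hint ζ h1 h2]
      calc omega0 ^ (Ordinal.lift.{v} ξ) * e (N ζ) + omega0 ^ (Ordinal.lift.{v} ζ)
          < omega0 ^ (Ordinal.lift.{v} ξ) * e (N ζ) + omega0 ^ (Ordinal.lift.{v} ξ) :=
            add_lt_add_right ((opow_lt_opow_iff_right one_lt_omega0).2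
              (Ordinal.lift_lt.2 h2)) _
      _ = omega0 ^ (Ordinal.lift.{v} ξ) * (e (N ζ) + 1) := by rw [mul_add, mul_one]
      _ ≤ omega0 ^ (Ordinal.lift.{v} ξ) * c :=
            (mul_le_mul_iff_right₀ (opow_pos' _)).2 (helt _)
      _ = δ := hc.symm
    have hgt_α : ∀ ζ, ξ₀ < ζ → ζ < ξ → α < h ζ := by
      intro ζ h1 h2
      rw [hint ζ h1 h2]
      calc α < omega0 ^ (Ordinal.lift.{v} ξ) * e 0 := he0
      _ ≤ omega0 ^ (Ordinal.lift.{v} ξ) * e (N ζ) :=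
            (mul_le_mul_iff_right₀ (opow_pos' _)).2 (hemono (Nat.zero_le _))
      _ ≤ _ := le_self_add
    have hbound : ∀ ζ, ξ₀ ≤ ζ → ζ ≤ ξ → α ≤ h ζ ∧ h ζ ≤ δ := by
      intro ζ h1 h2
      rcases le_or_gt ζ ξ₀ with h3 | h3
      · rw [hhdef]; dsimp only; rw [if_pos h3]; exact ⟨le_rfl, hαδ.le⟩
      rcases h2.lt_or_eq with h4 | rfl
      · exact ⟨(hgt_α ζ h3 h4).le, (hlt_δ ζ h3 h4).le⟩
      · rw [hhξ]; exact ⟨hαδ.le, le_rfl⟩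
    have hmono : ∀ ζ ζ', ξ₀ ≤ ζ → ζ < ζ' → ζ' ≤ ξ → h ζ < h ζ' := by
      intro ζ ζ' h1 h2 h3
      have hζ'₀ : ξ₀ < ζ' := lt_of_le_of_lt h1 h2
      rcases le_or_gt ζ ξ₀ with h5 | h5
      · have hζα : h ζ = α := by rw [hhdef]; dsimp only; rw [if_pos h5]
        rw [hζα]
        rcases h3.lt_or_eq with h4 | rfl
        · exact hgt_α ζ' hζ'₀ h4
        · rw [hhξ]; exact hαδ
      · have h6 : ζ < ξ := lt_of_lt_of_le h2 h3
        rcases h3.lt_or_eq with h4 | rfl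
        · rw [hint ζ h5 h6, hint ζ' hζ'₀ h4]
          have hNN : N ζ ≤ N ζ' := hNmin ζ h6 (N ζ') (h2.le.trans (hNle ζ' h4))
          calc omega0 ^ (Ordinal.lift.{v} ξ) * e (N ζ) + omega0 ^ (Ordinal.lift.{v} ζ)
              < omega0 ^ (Ordinal.lift.{v} ξ) * e (N ζ) + omega0 ^ (Ordinal.lift.{v} ζ') :=
                add_lt_add_right ((opow_lt_opow_iff_right one_lt_omega0).2
                  (Ordinal.lift_lt.2 h2)) _
          _ ≤ omega0 ^ (Ordinal.lift.{v} ξ) * e (N ζ') + omega0 ^ (Ordinal.lift.{v} ζ') := by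
                apply add_le_add_left
                exact (mul_le_mul_iff_right₀ (opow_pos' _)).2 (hemono hNN)
        · rw [hhξ]; exact hlt_δ ζ h5 h6
    refine ⟨h, hbound, hmono, ?_, hhξ₀, hhξ⟩
    intro μ h1 h2 hμlim β hβ
    rcases h2.lt_or_eq with h4 | hμξ
    · -- interior limit
      rw [hint μ h1 h4] at hβ
      have hzNμ : z (N μ) < μ := hNgt μ h1 h4
      rcases lt_or_ge β (omega0 ^ (Ordinal.lift.{v} ξ) * e (N μ)) with hc1 | hc1
      · set ζ := max (z (N μ)) ξ₀ + 1 with hζdef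
        have hζμ : ζ < μ := by
          rw [hζdef, add_one_eq_succ]
          exact hμlim.succ_lt (max_lt hzNμ h1)
        have hξ₀ζ : ξ₀ < ζ := lt_of_le_of_lt (le_max_right _ _) (lt_add_one _)
        have hNζ : N ζ = N μ := by
          apply hNeq (N μ) ζ (lt_of_lt_of_le hζμ h4.le)
          · exact lt_of_le_of_lt (le_max_left _ _) (lt_add_one _)
          · exact hζμ.le.trans (hNle μ h4)
        refine ⟨ζ, hξ₀ζ.le, hζμ, ?_⟩
        rw [hint ζ hξ₀ζ (lt_of_lt_of_le hζμ h4.le), hNζ]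
        exact lt_of_lt_of_le hc1 (le_self_add)
      · have hγ : β - omega0 ^ (Ordinal.lift.{v} ξ) * e (N μ) <
            omega0 ^ (Ordinal.lift.{v} μ) := by
          rw [Ordinal.sub_lt_of_le hc1]
          exact hβ
        obtain ⟨ρ, hρμ, hγρ⟩ := (lt_opow_of_isSuccLimit omega0_ne_zero
          (Ordinal.isSuccLimit_lift.2 hμlim)).1 hγ
        obtain ⟨ζ', hζ'⟩ := Ordinal.mem_range_lift_of_le hρμ.le
        have hζ'μ : ζ' < μ := by
          rw [← Ordinal.lift_lt.{v,u}]
          rw [hζ']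
          exact hρμ
        set ζ := max ζ' (max (z (N μ)) ξ₀) + 1 with hζdef
        have hζμ : ζ < μ := by
          rw [hζdef, add_one_eq_succ]
          exact hμlim.succ_lt (max_lt hζ'μ (max_lt hzNμ h1))
        have hξ₀ζ : ξ₀ < ζ :=
          lt_of_le_of_lt ((le_max_right _ _).trans (le_max_right _ _)) (lt_add_one _)
        have hNζ : N ζ = N μ := by
          apply hNeq (N μ) ζ (lt_of_lt_of_le hζμ h4.le)
          · exact lt_of_le_of_lt ((le_max_left _ _).trans (le_max_right _ _)) (lt_add_one _)
          · exact hζμ.le.trans (hNle μ h4)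
        refine ⟨ζ, hξ₀ζ.le, hζμ, ?_⟩
        rw [hint ζ hξ₀ζ (lt_of_lt_of_le hζμ h4.le), hNζ]
        calc β = omega0 ^ (Ordinal.lift.{v} ξ) * e (N μ) +
              (β - omega0 ^ (Ordinal.lift.{v} ξ) * e (N μ)) :=
              (Ordinal.add_sub_cancel_of_le hc1).symm
        _ < omega0 ^ (Ordinal.lift.{v} ξ) * e (N μ) + omega0 ^ (Ordinal.lift.{v} ζ) := by
            apply add_lt_add_right
            refine lt_of_lt_of_le hγρ ?_
            rw [← hζ']
            exact opow_le_opow_right omega0_pos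
              (Ordinal.lift_le.2 ((le_max_left _ _).trans (lt_add_one _).le))
    · -- μ = ξ
      subst hμξ
      rw [hhξ] at hβ
      obtain ⟨n, hn⟩ := hecof β hβ
      set ζ := z (n + 1) with hζdef
      have hζξ : ζ < μ := hzlt _
      have hξ₀ζ : ξ₀ < ζ := by
        rw [hζdef, ← hz0]
        exact hzmono (by omega)
      have hNζ : N ζ = n := hNeq n ζ hζξ (hzs n) le_rfl
      refine ⟨ζ, hξ₀ζ.le, hζξ, ?_⟩
      rw [hint ζ hξ₀ζ hζξ, hNζ]
      exact hn

end Stmt1Aux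

/-- if `g` is a finite strictly increasing partial function (domain `s`)
with `ξ ∈ s`, `rank(g ζ, g ζ) ≥ ζ` for all `ζ ∈ s`, and `ξ₀ = max (s ∩ ξ)` exists,
then there is a strictly increasing continuous `h : [ξ₀, ξ] → [g ξ₀, g ξ]` with
`h ξ₀ = g ξ₀` and `h ξ = g ξ`. -/
theorem stmt1 (ξ : Ordinal) (hξ : ξ < omega1) (s : Finset Ordinal) (g : Ordinal → Ordinal)
    (hdom : ∀ ζ ∈ s, ζ < omega1) (hran : ∀ ζ ∈ s, g ζ < omega1)
    (hmono : ∀ ζ ∈ s, ∀ ζ' ∈ s, ζ < ζ' → g ζ < g ζ')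
    (hrank : ∀ ζ ∈ s, rankGE (Set.Iio (g ζ)) (g ζ) ζ)
    (hξs : ξ ∈ s)
    (ξ₀ : Ordinal) (hξ₀s : ξ₀ ∈ s) (hξ₀lt : ξ₀ < ξ)
    (hmax : ∀ ζ ∈ s, ζ < ξ → ζ ≤ ξ₀) :
    ∃ h : Ordinal → Ordinal,
      (∀ ζ, ξ₀ ≤ ζ → ζ ≤ ξ → g ξ₀ ≤ h ζ ∧ h ζ ≤ g ξ) ∧
      (∀ ζ ζ', ξ₀ ≤ ζ → ζ < ζ' → ζ' ≤ ξ → h ζ < h ζ') ∧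
      (∀ δ, ξ₀ < δ → δ ≤ ξ → Order.IsSuccLimit δ → h δ = sSup (h '' Set.Ico ξ₀ δ)) ∧
      h ξ₀ = g ξ₀ ∧ h ξ = g ξ := by
  classical
  have hαδ : g ξ₀ < g ξ := hmono ξ₀ hξ₀s ξ hξs hξ₀lt
  have hξne : ξ ≠ 0 := by rintro rfl; exact (zero_le (a := ξ₀)).not_gt hξ₀lt
  have hdvd := Stmt1Aux.rank_opow_dvd.{u_1, u_2} hξne (hrank ξ hξs)
  have hδc : Ordinal.lift.{u_1, u_2} (g ξ) < omega1 := by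
    rw [← Stmt1Aux.lift_omega1.{u_2, u_1}]
    exact Ordinal.lift_lt.{u_1, u_2}.2 (hran ξ hξs)
  obtain ⟨H, hb, hm, hcf, h0, h1⟩ :=
    Stmt1Aux.key.{u_1, u_2} hξ hδc hξ₀lt (Ordinal.lift_lt.{u_1, u_2}.2 hαδ) hdvd
  set h : Ordinal → Ordinal := fun ζ =>
    if hr : ∃ a, Ordinal.lift.{u_1, u_2} a = H ζ then hr.choose else 0 with hhdef
  have hlift : ∀ ζ, ξ₀ ≤ ζ → ζ ≤ ξ → Ordinal.lift.{u_1, u_2} (h ζ) = H ζ := by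
    intro ζ k1 k2
    have hub : H ζ ≤ Ordinal.lift.{u_1, u_2} (g ξ) := (hb ζ k1 k2).2
    obtain ⟨a, ha⟩ := Ordinal.mem_range_lift_of_le.{u_2, u_1} hub
    have hex : ∃ a, Ordinal.lift.{u_1, u_2} a = H ζ := ⟨a, ha⟩
    rw [hhdef]
    dsimp only
    rw [dif_pos hex]
    exact hex.choose_spec
  have hhξ₀ : h ξ₀ = g ξ₀ := by
    have := hlift ξ₀ le_rfl hξ₀lt.le
    rw [h0] at this
    exact Ordinal.lift_inj.{u_1, u_2}.1 this
  have hhξ : h ξ = g ξ := by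
    have := hlift ξ hξ₀lt.le le_rfl
    rw [h1] at this
    exact Ordinal.lift_inj.{u_1, u_2}.1 this
  refine ⟨h, ?_, ?_, ?_, hhξ₀, hhξ⟩
  · intro ζ k1 k2
    have hbb := hb ζ k1 k2
    rw [← hlift ζ k1 k2] at hbb
    exact ⟨Ordinal.lift_le.{u_1, u_2}.1 hbb.1, Ordinal.lift_le.{u_1, u_2}.1 hbb.2⟩
  · intro ζ ζ' k1 k2 k3
    have := hm ζ ζ' k1 k2 k3
    rw [← hlift ζ k1 (k2.le.trans k3), ← hlift ζ' (k1.trans k2.le) k3] at this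
    exact Ordinal.lift_lt.{u_1, u_2}.1 this
  · intro μ k1 k2 hμlim
    have hne : (h '' Set.Ico ξ₀ μ).Nonempty := ⟨h ξ₀, ⟨ξ₀, ⟨le_rfl, k1⟩, rfl⟩⟩
    refine (Stmt1Aux.sSup_eq_of hne ?_ ?_).symm
    · rintro x ⟨ζ, ⟨hζ1, hζ2⟩, rfl⟩
      have := hm ζ μ hζ1 hζ2 k2
      rw [← hlift ζ hζ1 (hζ2.le.trans k2), ← hlift μ (hζ1.trans hζ2.le) k2] at this
      exact (Ordinal.lift_lt.{u_1, u_2}.1 this).le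
    · intro β hβ
      have hβ' : Ordinal.lift.{u_1, u_2} β < H μ := by
        rw [← hlift μ (k1.le) k2]
        exact Ordinal.lift_lt.{u_1, u_2}.2 hβ
      obtain ⟨ζ, hζ1, hζ2, hζ3⟩ := hcf μ k1 k2 hμlim (Ordinal.lift.{u_1, u_2} β) hβ'
      refine ⟨h ζ, ⟨ζ, ⟨hζ1, hζ2⟩, rfl⟩, ?_⟩
      rw [← hlift ζ hζ1 (hζ2.le.trans k2)] at hζ3
      exact Ordinal.lift_lt.{u_1, u_2}.1 hζ3
end
end

section
/- If α < ω₁ and f : α → ω is continuous with respect to the order topology on α, then there is a cofinal subset C of α of order type at most ω such that for all ε < α, the value f(ε) depends only on the cardinality of ε ∩ C (i.e., there is a function g : ℕ → ω with f(ε) = g(|ε ∩ C|) for all ε < α). -/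
noncomputable section

open Set

/-- A club (closed unbounded) subset of `ω₁`. -/
def IsClubOmega1 (C : Set Ordinal) : Prop :=
  C ⊆ Set.Iio omega1 ∧ (∀ α < omega1, ∃ β ∈ C, α < β) ∧
    (∀ δ, δ < omega1 → IsLimitPointOf C δ → δ ∈ C)

/-- if `α < ω₁` and `f : α → ω` is continuous, there is a cofinal
`C ⊆ α` of order type at most `ω` such that `f ε` depends only on `|ε ∩ C|`. -/
theorem stmt4 (α : Ordinal) (hα : α < omega1) (f : Set.Iio α → ℕ) (hf : Continuous f) :
    ∃ C : Set Ordinal, C ⊆ Set.Iio α ∧ (∀ β < α, ∃ γ ∈ C, β ≤ γ) ∧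
      (∀ x < α, (C ∩ Set.Iio x).Finite) ∧
      ∃ g : ℕ → ℕ, ∀ ε : Set.Iio α, f ε = g (Nat.card ↥(C ∩ Set.Iio ε.val)) := by
  rcases eq_or_ne α 0 with rfl | h0
  · exact ⟨∅, by simp, fun β hβ => absurd hβ (zero_le (a := β)).not_gt,
      fun x _ => by simp, fun _ => 0, fun ε => absurd ε.2 (zero_le (a := ε.val)).not_gt⟩
  have hαpos : 0 < α := pos_iff_ne_zero.2 h0
  -- extended function
  set f' : Ordinal → ℕ := fun x => if h : x < α then f ⟨x, h⟩ else 0 with hf'def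
  have hf' : ∀ x (h : x < α), f' x = f ⟨x, h⟩ := fun x h => dif_pos h
  -- continuity key lemma
  have key : ∀ δ, δ < α → Order.IsSuccLimit δ → ∃ β < δ, ∀ t, β < t → t < δ → f' t = f' δ := by
    intro δ hδ hlim
    have hopen : IsOpen (f ⁻¹' {f ⟨δ, hδ⟩}) := (isOpen_discrete _).preimage hf
    rw [isOpen_induced_iff] at hopen
    obtain ⟨U, hU, hUeq⟩ := hopen
    have hδU : δ ∈ U := by
      have : (⟨δ, hδ⟩ : Set.Iio α) ∈ f ⁻¹' {f ⟨δ, hδ⟩} := rfl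
      rw [← hUeq] at this; exact this
    obtain ⟨a, ha, hsub⟩ := Ordinal.isOpen_iff.1 hU δ hδU hlim
    refine ⟨a, ha, fun t h1 h2 => ?_⟩
    have ht : t < α := h2.trans hδ
    have : (⟨t, ht⟩ : Set.Iio α) ∈ Subtype.val ⁻¹' U := hsub ⟨h1, h2⟩
    rw [hUeq] at this
    rw [hf' t ht, hf' δ hδ]; exact this
  -- jump points
  set D : Set Ordinal := {σ | σ + 1 < α ∧ f' (σ + 1) ≠ f' σ} with hDdef
  have hDsub : D ⊆ Set.Iio α := fun σ hσ => (lt_of_lt_of_le (lt_add_one σ) hσ.1.le)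
  -- constancy on jump-free intervals
  have L1 : ∀ ε', ε' < α → ∀ ε, ε ≤ ε' → (∀ t, ε ≤ t → t < ε' → t ∉ D) → f' ε = f' ε' := by
    intro ε'
    induction ε' using Ordinal.induction with
    | h ε' IH =>
      intro hε' ε hle hnoD
      rcases eq_or_lt_of_le hle with rfl | hlt
      · rfl
      rcases Ordinal.zero_or_succ_or_isSuccLimit ε' with rfl | ⟨σ, rfl⟩ | hlim
      · exact absurd hlt (zero_le (a := ε)).not_gt
      · have hσlt : σ < Order.succ σ := Order.lt_succ σ
        have hεσ : ε ≤ σ := Order.lt_succ_iff.1 hlt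
        have hσD : σ ∉ D := hnoD σ hεσ hσlt
        have hσα : σ < α := hσlt.trans hε'
        have h1 : f' (σ + 1) = f' σ := by
          by_contra hne
          exact hσD ⟨by rwa [← Ordinal.add_one_eq_succ] at hε', hne⟩
        have h2 : f' ε = f' σ :=
          IH σ hσlt hσα ε hεσ (fun t h1 h2 => hnoD t h1 (h2.trans hσlt))
        rw [h2, ← h1, Ordinal.add_one_eq_succ]
      · obtain ⟨β, hβ, hconst⟩ := key ε' hε' hlim
        set t := max β ε + 1 with htdef
        have htlt : t < ε' := by
          rw [htdef, Ordinal.add_one_eq_succ]; exact hlim.succ_lt (max_lt hβ hlt)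
        have hεt : ε ≤ t := le_of_lt (lt_of_le_of_lt (le_max_right β ε) (lt_add_one _))
        have h1 : f' t = f' ε' :=
          hconst t (lt_of_le_of_lt (le_max_left β ε) (lt_add_one _)) htlt
        have h2 : f' ε = f' t :=
          IH t htlt (htlt.trans hε') ε hεt (fun s hs1 hs2 => hnoD s hs1 (hs2.trans htlt))
        rw [h2, h1]
  -- finiteness of jump points below any x < α
  have L2 : ∀ x, x < α → (D ∩ Set.Iio x).Finite := by
    intro x
    induction x using Ordinal.induction with
    | h x IH =>
      intro hx
      rcases Ordinal.zero_or_succ_or_isSuccLimit x with rfl | ⟨σ, rfl⟩ | hlim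
      · have : Set.Iio (0 : Ordinal) = ∅ := by
          ext t; simp
        rw [this, Set.inter_empty]; exact Set.finite_empty
      · have hσα : σ < α := (Order.lt_succ σ).trans hx
        have hsub : D ∩ Set.Iio (Order.succ σ) ⊆ insert σ (D ∩ Set.Iio σ) := by
          rintro t ⟨htD, htlt⟩
          rcases eq_or_lt_of_le (Order.lt_succ_iff.1 (Set.mem_Iio.1 htlt)) with rfl | h
          · exact mem_insert _ _
          · exact mem_insert_of_mem _ ⟨htD, h⟩
        exact Set.Finite.subset ((IH σ (Order.lt_succ σ) hσα).insert σ) hsub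
      · obtain ⟨β, hβ, hconst⟩ := key x hx hlim
        have hsub : D ∩ Set.Iio x ⊆ D ∩ Set.Iio (β + 1) := by
          rintro σ ⟨hσD, hσx⟩
          refine ⟨hσD, ?_⟩
          by_contra hc
          have hβσ1 : β + 1 ≤ σ := le_of_not_gt (fun h => hc (Set.mem_Iio.2 h))
          have hβσ : β < σ := lt_of_lt_of_le (lt_add_one β) hβσ1
          have hσx' : σ < x := Set.mem_Iio.1 hσx
          have hσ1x : σ + 1 < x := by
            rw [Ordinal.add_one_eq_succ]; exact hlim.succ_lt hσx'
          exact hσD.2 (by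
            rw [hconst (σ + 1) (hβσ.trans (lt_add_one σ)) hσ1x, hconst σ hβσ hσx'])
        have hβ1 : β + 1 < x := by
          rw [Ordinal.add_one_eq_succ]; exact hlim.succ_lt hβ
        exact Set.Finite.subset (IH (β + 1) hβ1 (hβ1.trans hx)) hsub
  -- surjection onto Iio α
  obtain ⟨e, he⟩ : ∃ e : ℕ → (Set.Iio α), Function.Surjective e := by
    have hc : (Set.Iio α).Countable := by
      rw [Cardinal.countable_iff_lt_aleph_one, Ordinal.mk_Iio_ordinal]
      have h1 : α.card < Cardinal.aleph 1 := Cardinal.lt_ord.1 hα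
      simpa using Cardinal.lift_lt.2 h1
    have : Countable (Set.Iio α) := hc.to_subtype
    have : Nonempty (Set.Iio α) := ⟨⟨0, hαpos⟩⟩
    exact exists_surjective_nat _
  -- monotone cofinal sequence
  set s : ℕ → Ordinal := fun n => Finset.sup (Finset.range (n + 1)) (fun i => (e i).val)
    with hsdef
  have hslt : ∀ n, s n < α := by
    intro n
    rw [hsdef]
    refine (Finset.sup_lt_iff ?_).2 (fun i _ => (e i).2)
    exact hαpos
  have hsle : ∀ k, (e k).val ≤ s k := by
    intro k; rw [hsdef]; exact Finset.le_sup (f := fun i => (e i).val) (Finset.mem_range.2 (lt_add_one k))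
  have hsmono : Monotone s := by
    intro m n hmn; rw [hsdef]
    exact Finset.sup_mono (Finset.range_subset_range.2 (by omega))
  set C : Set Ordinal := D ∪ Set.range s with hCdef
  have Cfin : ∀ x, x < α → (C ∩ Set.Iio x).Finite := by
    intro x hx
    obtain ⟨k, hk⟩ := he ⟨x, hx⟩
    have hxk : x ≤ s k := by
      have := hsle k
      rw [hk] at this
      exact this
    have h1 : Set.range s ∩ Set.Iio x ⊆ s '' Set.Iio k := by
      rintro y ⟨⟨n, rfl⟩, hy⟩
      rcases lt_or_ge n k with h | h
      · exact ⟨n, h, rfl⟩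
      · exact absurd (Set.mem_Iio.1 hy) (not_lt.2 (hxk.trans (hsmono h)))
    have h2 : C ∩ Set.Iio x ⊆ (D ∩ Set.Iio x) ∪ (Set.range s ∩ Set.Iio x) := by
      rintro y ⟨hy1 | hy2, hy3⟩
      · exact Or.inl ⟨hy1, hy3⟩
      · exact Or.inr ⟨hy2, hy3⟩
    exact Set.Finite.subset ((L2 x hx).union
      (((Set.finite_Iio k).image s).subset h1)) h2
  refine ⟨C, ?_, ?_, Cfin, ?_⟩
  · rintro γ (hγ | ⟨n, rfl⟩)
    · exact hDsub hγ
    · exact hslt n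
  · intro β hβ
    obtain ⟨k, hk⟩ := he ⟨β, hβ⟩
    refine ⟨s k, Or.inr ⟨k, rfl⟩, ?_⟩
    have := hsle k
    rw [hk] at this
    exact this
  · -- the function g
    have main : ∀ ε ε' : Set.Iio α,
        Nat.card ↥(C ∩ Set.Iio ε.val) = Nat.card ↥(C ∩ Set.Iio ε'.val) → f ε = f ε' := by
      have aux : ∀ ε ε' : Set.Iio α, ε.val ≤ ε'.val →
          Nat.card ↥(C ∩ Set.Iio ε.val) = Nat.card ↥(C ∩ Set.Iio ε'.val) → f ε = f ε' := by
        intro ε ε' hle hcard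
        have hsub : C ∩ Set.Iio ε.val ⊆ C ∩ Set.Iio ε'.val :=
          Set.inter_subset_inter_right _ (Set.Iio_subset_Iio hle)
        have hfin : (C ∩ Set.Iio ε'.val).Finite := Cfin _ ε'.2
        have heq : C ∩ Set.Iio ε.val = C ∩ Set.Iio ε'.val := by
          refine Set.eq_of_subset_of_ncard_le hsub ?_ hfin
          rw [← Nat.card_coe_set_eq, ← Nat.card_coe_set_eq, hcard]
        have hnoD : ∀ t, ε.val ≤ t → t < ε'.val → t ∉ D := by
          intro t h1 h2 htD
          have hmem : t ∈ C ∩ Set.Iio ε'.val := ⟨Or.inl htD, h2⟩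
          rw [← heq] at hmem
          exact absurd (Set.mem_Iio.1 hmem.2) (not_lt.2 h1)
        have hval : f' ε.val = f' ε'.val := L1 ε'.val ε'.2 ε.val hle hnoD
        rw [hf' _ ε.2, hf' _ ε'.2] at hval
        exact hval
      intro ε ε' h
      rcases le_total ε.val ε'.val with hle | hle
      · exact aux ε ε' hle h
      · exact (aux ε' ε hle h.symm).symm
    classical
    refine ⟨fun n => if h : ∃ ε : Set.Iio α, Nat.card ↥(C ∩ Set.Iio ε.val) = n
      then f h.choose else 0, fun ε => ?_⟩
    have hex : ∃ ε' : Set.Iio α,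
        Nat.card ↥(C ∩ Set.Iio ε'.val) = Nat.card ↥(C ∩ Set.Iio ε.val) := ⟨ε, rfl⟩
    show f ε = if h : ∃ ε' : Set.Iio α,
        Nat.card ↥(C ∩ Set.Iio ε'.val) = Nat.card ↥(C ∩ Set.Iio ε.val)
      then f h.choose else 0
    rw [dif_pos hex]
    exact (main hex.choose ε hex.choose_spec).symm
end
end

section
/- Club Guessing implies mho: if there is a ladder system ⟨A_δ : δ ∈ Lim(ω₁)⟩ such that for every club C ⊆ ω₁ there is δ ∈ C with a final segment of A_δ contained in C, then there exists a sequence ⟨f_α : α < ω₁⟩ such that each f_α : α → ω is continuous (order topology) and for every club E ⊆ ω₁ there is δ ∈ E such that f_δ takes all values in ω on E ∩ δ. -/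
noncomputable section

open Set

/-! ### Auxiliary material for statement 6 -/

universe u v

lemma omega1_lift_eq : Ordinal.lift.{u, v} omega1.{v} = Ordinal.lift.{v, u} omega1.{u} := by
  simp only [omega1, Cardinal.lift_ord, Cardinal.lift_aleph, Ordinal.lift_one]

open scoped Classical in
/-- Transfer an ordinal below `ω₁` from one universe to another. -/
def odown (o : Ordinal.{u}) : Ordinal.{v} :=
  if h : Ordinal.lift.{v, u} o < Ordinal.lift.{u, v} omega1.{v} then
    Classical.choose (Set.mem_range.1 (Ordinal.mem_range_lift_of_le (le_of_lt h)))
  else 0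

lemma odown_lift {o : Ordinal.{u}} (ho : o < omega1.{u}) :
    Ordinal.lift.{u, v} (odown.{u, v} o) = Ordinal.lift.{v, u} o ∧
      odown.{u, v} o < omega1.{v} := by
  have h : Ordinal.lift.{v, u} o < Ordinal.lift.{u, v} omega1.{v} := by
    rw [omega1_lift_eq]
    exact Ordinal.lift_lt.2 ho
  have hs := Classical.choose_spec (Set.mem_range.1 (Ordinal.mem_range_lift_of_le (le_of_lt h)))
  have hd : odown.{u, v} o = Classical.choose (Set.mem_range.1 (Ordinal.mem_range_lift_of_le (le_of_lt h))) := by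
    rw [odown, dif_pos h]
  rw [hd]
  refine ⟨hs, ?_⟩
  apply Ordinal.lift_lt.1
  rw [hs]
  exact h

lemma odown_odown {o : Ordinal.{u}} (ho : o < omega1.{u}) :
    odown.{v, u} (odown.{u, v} o) = o := by
  obtain ⟨h1, h2⟩ := odown_lift.{u, v} ho
  obtain ⟨h3, _⟩ := odown_lift.{v, u} h2
  exact Ordinal.lift_inj.1 (h3.trans h1)

lemma odown_lt_iff {a b : Ordinal.{u}} (ha : a < omega1.{u}) (hb : b < omega1.{u}) :
    odown.{u, v} a < odown.{u, v} b ↔ a < b := by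
  rw [← Ordinal.lift_lt.{u, v}, (odown_lift ha).1, (odown_lift hb).1, Ordinal.lift_lt]

lemma odown_isLimit {o : Ordinal.{u}} (ho : o < omega1.{u}) (h : Order.IsSuccLimit o) :
    Order.IsSuccLimit (odown.{u, v} o) := by
  obtain ⟨h1, h2⟩ := odown_lift.{u, v} ho
  have key : Order.IsSuccLimit (Ordinal.lift.{u, v} (odown.{u, v} o)) ↔ _ :=
    Ordinal.isSuccLimit_lift
  rw [h1, Ordinal.isSuccLimit_lift] at key
  exact key.1 h

/-- Existence of the `m`-th element of an infinite set with finite initial segments. -/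
lemma aux_exists_nth {S : Set Ordinal} {δ : Ordinal} (hS : S ⊆ Set.Iio δ)
    (hlim : Order.IsSuccLimit δ) (hinf : S.Infinite)
    (hfin : ∀ x < δ, (S ∩ Set.Iio x).Finite) :
    ∀ m : ℕ, ∃ a ∈ S, (S ∩ Set.Iio a).ncard = m := by
  intro m
  induction m with
  | zero =>
    have hne : S.Nonempty := hinf.nonempty
    refine ⟨Ordinal.lt_wf.min S hne, Ordinal.lt_wf.min_mem S hne, ?_⟩
    have : S ∩ Set.Iio (Ordinal.lt_wf.min S hne) = ∅ := by
      rw [Set.eq_empty_iff_forall_notMem]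
      rintro x ⟨hxS, hxlt⟩
      exact Ordinal.lt_wf.not_lt_min S hxS hxlt
    rw [this, Set.ncard_empty]
  | succ m ih =>
    obtain ⟨a, haS, hacount⟩ := ih
    have hT : (S ∩ Set.Ioi a).Nonempty := by
      by_contra h
      rw [Set.not_nonempty_iff_eq_empty] at h
      have hsub : S ⊆ S ∩ Set.Iio (Order.succ a) := by
        intro x hx
        have hxa : x ≤ a := by
          by_contra hle
          push_neg at hle
          have hmem : x ∈ S ∩ Set.Ioi a := ⟨hx, hle⟩
          rw [h] at hmem
          exact hmem
        exact ⟨hx, Order.lt_succ_iff.2 hxa⟩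
      exact hinf ((hfin (Order.succ a) (hlim.succ_lt (hS haS))).subset hsub)
    set a' := Ordinal.lt_wf.min _ hT with ha'def
    have ha'T : a' ∈ S ∩ Set.Ioi a := Ordinal.lt_wf.min_mem _ hT
    refine ⟨a', ha'T.1, ?_⟩
    have hset : S ∩ Set.Iio a' = insert a (S ∩ Set.Iio a) := by
      ext x
      constructor
      · rintro ⟨hxS, hxlt⟩
        rcases lt_trichotomy x a with h | h | h
        · exact Or.inr ⟨hxS, h⟩
        · exact Or.inl h
        · exact absurd hxlt (Ordinal.lt_wf.not_lt_min _ (⟨hxS, h⟩ : x ∈ S ∩ Set.Ioi a))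
      · rintro (rfl | ⟨hxS, hxlt⟩)
        · exact ⟨haS, ha'T.2⟩
        · exact ⟨hxS, (hxlt.trans ha'T.2 : x < a')⟩
    rw [hset, Set.ncard_insert_of_notMem (fun h => absurd h.2 (lt_irrefl a))
      (hfin a (hS haS)), hacount]

/-- The counting function of a set with finite initial segments is locally constant,
hence continuous (composed with anything). -/
lemma aux_cont {S : Set Ordinal} {δ : Ordinal}
    (hfin : ∀ x < δ, (S ∩ Set.Iio x).Finite) (u : ℕ → ℕ) :
    Continuous (fun x : Set.Iio δ => u ((S ∩ Set.Iio x.1).ncard)) := by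
  have hlc : IsLocallyConstant (fun x : Set.Iio δ => (S ∩ Set.Iio x.1).ncard) := by
    rw [IsLocallyConstant.iff_exists_open]
    rintro ⟨γ, hγ⟩
    by_cases h : (S ∩ Set.Iio γ).Nonempty
    · set b := sSup (S ∩ Set.Iio γ) with hbdef
      have hb : b ∈ S ∩ Set.Iio γ := h.csSup_mem (hfin γ hγ)
      refine ⟨Subtype.val ⁻¹' Set.Ioo b (Order.succ γ),
        isOpen_Ioo.preimage continuous_subtype_val, ⟨hb.2, Order.lt_succ γ⟩, ?_⟩
      rintro ⟨γ', hγ'⟩ ⟨hy1, hy2⟩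
      have hle : γ' ≤ γ := Order.lt_succ_iff.1 hy2
      have : S ∩ Set.Iio γ' = S ∩ Set.Iio γ := by
        apply Set.Subset.antisymm
        · exact Set.inter_subset_inter_right _ (Set.Iio_subset_Iio hle)
        · rintro x ⟨hxS, hxlt⟩
          exact ⟨hxS, lt_of_le_of_lt (le_csSup ((hfin γ hγ).bddAbove) ⟨hxS, hxlt⟩) hy1⟩
      simp only [this]
    · rw [Set.not_nonempty_iff_eq_empty] at h
      refine ⟨Subtype.val ⁻¹' Set.Iio (Order.succ γ),
        isOpen_Iio.preimage continuous_subtype_val, Order.lt_succ γ, ?_⟩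
      rintro ⟨γ', hγ'⟩ hy
      have hle : γ' ≤ γ := Order.lt_succ_iff.1 hy
      have : S ∩ Set.Iio γ' = S ∩ Set.Iio γ := by
        rw [h, ← Set.subset_empty_iff, ← h]
        exact Set.inter_subset_inter_right _ (Set.Iio_subset_Iio hle)
      simp only [this]
  exact (hlc.comp u).continuous

/-- The set of limit points of a club that belong to the club is itself a club. -/
lemma aux_derived {E : Set Ordinal} (hE : IsClubW1 E) :
    IsClubW1 {δ | δ ∈ E ∧ IsLimitPointOf E δ} := by
  obtain ⟨hsub, hunb, hcl⟩ := hE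
  refine ⟨fun x hx => hsub hx.1, ?_, ?_⟩
  · intro α hα
    classical
    set F : Ordinal → Ordinal := fun x =>
      if hx : x < omega1 then Classical.choose (hunb x hx) else 0 with hFdef
    have hkey : ∀ x, x < omega1 → F x ∈ E ∧ x < F x ∧ F x < omega1 := by
      intro x hx
      have hspec := Classical.choose_spec (hunb x hx)
      have : F x = Classical.choose (hunb x hx) := dif_pos hx
      rw [this]
      exact ⟨hspec.1, hspec.2, hsub hspec.1⟩
    set g : ℕ → Ordinal := fun n => F^[n + 1] α with hgdef
    have hlt : ∀ n, g n < omega1 ∧ g n ∈ E := by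
      intro n
      induction n with
      | zero =>
        have := hkey α hα
        exact ⟨this.2.2, this.1⟩
      | succ n ih =>
        have hg : g (n + 1) = F (g n) := Function.iterate_succ_apply' F (n + 1) α
        have := hkey (g n) ih.1
        rw [hg]
        exact ⟨this.2.2, this.1⟩
    have hmono : ∀ n, g n < g (n + 1) := by
      intro n
      have hg : g (n + 1) = F (g n) := Function.iterate_succ_apply' F (n + 1) α
      rw [hg]
      exact (hkey (g n) (hlt n).1).2.1
    set β := ⨆ n, g n with hβdef
    have hβ : β < omega1 := by
        have := Ordinal.iSup_lt_omega_one (f := g)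
          (by simpa [omega1, Cardinal.ord_aleph] using fun n => (hlt n).1)
        simpa [omega1, Cardinal.ord_aleph] using this
    have hlimpt : IsLimitPointOf E β := by
      intro x hx
      obtain ⟨n, hn⟩ := Ordinal.lt_iSup_iff.1 hx
      exact ⟨g n, (hlt n).2, hn, lt_of_lt_of_le (hmono n) (Ordinal.le_iSup g (n + 1))⟩
    have hαβ : α < β := by
      have h0 : g 0 = F α := by simp [hgdef]
      have : α < g 0 := by rw [h0]; exact (hkey α hα).2.1
      exact lt_of_lt_of_le this (Ordinal.le_iSup g 0)
    exact ⟨β, ⟨hcl β hβ hlimpt, hlimpt⟩, hαβ⟩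
  · intro δ hδ h
    have hE' : IsLimitPointOf E δ := by
      intro x hx
      obtain ⟨ε, hεC, h1, h2⟩ := h x hx
      exact ⟨ε, hεC.1, h1, h2⟩
    exact ⟨hcl δ hδ hE', hE'⟩

/-- The single-universe version of Statement 6. -/
lemma aux_main {A : Ordinal.{u} → Set Ordinal.{u}} (hLad : IsLadder A)
    (hGuess : ∀ C, IsClubW1 C → ∃ δ ∈ C, Order.IsSuccLimit δ ∧
      ∃ β < δ, ∀ γ ∈ A δ, β < γ → γ ∈ C) :
    ∃ f : (α : Ordinal.{u}) → Set.Iio α → ℕ,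
      (∀ α, α < omega1.{u} → Continuous (f α)) ∧
      ∀ E, IsClubW1 E → ∃ δ ∈ E, ∀ n : ℕ, ∃ γ, ∃ hγ : γ < δ,
        γ ∈ E ∧ f δ ⟨γ, hγ⟩ = n := by
  classical
  refine ⟨fun α x =>
    if α < omega1 ∧ Order.IsSuccLimit α then (Nat.unpair ((A α ∩ Set.Iio x.1).ncard)).1
    else 0, ?_, ?_⟩
  · intro α hα
    by_cases hl : Order.IsSuccLimit α
    · simp only [if_pos (⟨hα, hl⟩ : α < omega1 ∧ Order.IsSuccLimit α)]
      exact aux_cont (hLad α hα hl).2.2.2 (fun k => (Nat.unpair k).1)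
    · simp only [if_neg (fun hc : α < omega1 ∧ Order.IsSuccLimit α => hl hc.2)]
      exact continuous_const
  · intro E hEclub
    have hC : IsClubW1 {δ | δ ∈ E ∧ IsLimitPointOf E δ} := aux_derived hEclub
    obtain ⟨δ, hδC, hδlim, β, hβδ, htail⟩ := hGuess _ hC
    have hδω : δ < omega1 := hC.1 hδC
    obtain ⟨hsub, hcof, hinf, hfin⟩ := hLad δ hδω hδlim
    refine ⟨δ, hδC.1, ?_⟩
    intro n
    set K := (A δ ∩ Set.Iio (Order.succ β)).ncard with hKdef
    obtain ⟨a, haS, hacount⟩ := aux_exists_nth hsub hδlim hinf hfin (Nat.pair n (K + 1))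
    have haβ : β < a := by
      by_contra hle
      push_neg at hle
      have hss : A δ ∩ Set.Iio a ⊆ A δ ∩ Set.Iio (Order.succ β) := by
        rintro x ⟨hx1, hx2⟩
        exact ⟨hx1, lt_of_lt_of_le hx2 (hle.trans (Order.le_succ β))⟩
      have hKle : Nat.pair n (K + 1) ≤ K := by
        rw [← hacount]
        exact Set.ncard_le_ncard hss (hfin (Order.succ β) (hδlim.succ_lt hβδ))
      have : K + 1 ≤ K := le_trans (Nat.right_le_pair n (K + 1)) hKle
      omega
    have haC := htail a haS haβ
    have haδ : a < δ := hsub haS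
    refine ⟨a, haδ, haC.1, ?_⟩
    simp only [if_pos (⟨hδω, hδlim⟩ : δ < omega1 ∧ Order.IsSuccLimit δ)]
    rw [hacount, Nat.unpair_pair]

/-- Club Guessing implies `℧` (mho). -/
theorem stmt6
    (hCG : ∃ A : Ordinal → Set Ordinal, IsLadder A ∧
      ∀ C, IsClubW1 C → ∃ δ ∈ C, Order.IsSuccLimit δ ∧
        ∃ β < δ, ∀ γ ∈ A δ, β < γ → γ ∈ C) :
    ∃ f : (α : Ordinal) → Set.Iio α → ℕ,
      (∀ α, α < omega1 → Continuous (f α)) ∧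
      ∀ E, IsClubW1 E → ∃ δ ∈ E, ∀ n : ℕ, ∃ γ, ∃ hγ : γ < δ,
        γ ∈ E ∧ f δ ⟨γ, hγ⟩ = n := by
  obtain ⟨A, hLad, hGuess⟩ := hCG
  -- transfer the ladder system to the universe of the conclusion
  set A₂ : Ordinal → Set Ordinal :=
    fun δ => {γ | γ < omega1 ∧ odown γ ∈ A (odown δ)} with hA₂def
  have hLad₂ : IsLadder A₂ := by
    intro δ hδ hδlim
    have hδ' : odown δ < omega1 := (odown_lift hδ).2
    have hδlim' : Order.IsSuccLimit (odown δ) := odown_isLimit hδ hδlim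
    obtain ⟨s1, s2, s3, s4⟩ := hLad (odown δ) hδ' hδlim'
    have himg : A₂ δ = odown '' A (odown δ) := by
      ext γ
      constructor
      · rintro ⟨hγω, hγA⟩
        exact ⟨odown γ, hγA, odown_odown hγω⟩
      · rintro ⟨γ', hγ'A, rfl⟩
        have hγ'ω : γ' < omega1 := (s1 hγ'A).trans hδ'
        exact ⟨(odown_lift hγ'ω).2, by rw [odown_odown hγ'ω]; exact hγ'A⟩
    refine ⟨?_, ?_, ?_, ?_⟩
    · rintro γ ⟨hγω, hγA⟩
      exact (odown_lt_iff hγω hδ).1 (s1 hγA)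
    · intro b hb
      have hbω : b < omega1 := hb.trans hδ
      obtain ⟨γ', hγ'A, hγ'gt⟩ := s2 (odown b) ((odown_lt_iff hbω hδ).2 hb)
      have hγ'ω : γ' < omega1 := (s1 hγ'A).trans hδ'
      refine ⟨odown γ', ⟨(odown_lift hγ'ω).2, by rw [odown_odown hγ'ω]; exact hγ'A⟩, ?_⟩
      have hkey : odown b < odown (odown γ') := by rw [odown_odown hγ'ω]; exact hγ'gt
      exact (odown_lt_iff hbω (odown_lift hγ'ω).2).1 hkey
    · rw [himg]
      refine (Set.infinite_image_iff ?_).2 s3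
      intro x hx y hy hxy
      have hxω : x < omega1 := (s1 hx).trans hδ'
      have hyω : y < omega1 := (s1 hy).trans hδ'
      rw [← odown_odown hxω, ← odown_odown hyω, hxy]
    · intro x hx
      have hxω : x < omega1 := hx.trans hδ
      have hsubim : A₂ δ ∩ Set.Iio x ⊆ odown '' (A (odown δ) ∩ Set.Iio (odown x)) := by
        rintro γ ⟨⟨hγω, hγA⟩, hγx⟩
        exact ⟨odown γ, ⟨hγA, (odown_lt_iff hγω hxω).2 hγx⟩, odown_odown hγω⟩
      exact (((s4 (odown x) ((odown_lt_iff hxω hδ).2 hx)).image odown).subset hsubim)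
  have hGuess₂ : ∀ C, IsClubW1 C → ∃ δ ∈ C, Order.IsSuccLimit δ ∧
      ∃ β < δ, ∀ γ ∈ A₂ δ, β < γ → γ ∈ C := by
    intro C hCclub
    set D : Set Ordinal := {o | o < omega1 ∧ odown o ∈ C} with hDdef
    have hDclub : IsClubW1 D := by
      refine ⟨fun x hx => hx.1, ?_, ?_⟩
      · intro α hα
        obtain ⟨β', hβ'C, hβ'gt⟩ := hCclub.2.1 (odown α) (odown_lift hα).2
        have hβ'ω : β' < omega1 := hCclub.1 hβ'C
        refine ⟨odown β', ⟨(odown_lift hβ'ω).2, by rw [odown_odown hβ'ω]; exact hβ'C⟩, ?_⟩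
        apply (odown_lt_iff hα (odown_lift hβ'ω).2).1
        rw [odown_odown hβ'ω]
        exact hβ'gt
      · intro δ hδ h
        refine ⟨hδ, hCclub.2.2 (odown δ) (odown_lift hδ).2 ?_⟩
        intro b hb
        have hbω : b < omega1 := hb.trans (odown_lift hδ).2
        have hb'δ : odown b < δ := by
          apply (odown_lt_iff (odown_lift hbω).2 hδ).1
          rw [odown_odown hbω]
          exact hb
        obtain ⟨ε, hεD, hε1, hε2⟩ := h (odown b) hb'δ
        have hεω : ε < omega1 := hεD.1
        refine ⟨odown ε, hεD.2, ?_, (odown_lt_iff hεω hδ).2 hε2⟩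
        have hkey : odown (odown b) < odown ε :=
          (odown_lt_iff (odown_lift hbω).2 hεω).2 hε1
        rwa [odown_odown hbω] at hkey
    obtain ⟨δ, hδD, hδlim, β, hβδ, htail⟩ := hGuess D hDclub
    have hδω : δ < omega1 := hδD.1
    have hβω : β < omega1 := hβδ.trans hδω
    refine ⟨odown δ, hδD.2, odown_isLimit hδω hδlim, odown β,
      (odown_lt_iff hβω hδω).2 hβδ, ?_⟩
    rintro γ ⟨hγω, hγA⟩ hγgt
    rw [odown_odown hδω] at hγA
    have hβγ : β < odown γ := by
      apply (odown_lt_iff hβω (odown_lift hγω).2).1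
      rw [odown_odown hγω]
      exact hγgt
    have hmem := (htail (odown γ) hγA hβγ).2
    rwa [odown_odown hγω] at hmem
  obtain ⟨f, h1, h2⟩ := aux_main hLad₂ hGuess₂
  exact ⟨f, h1, h2⟩
end
end

section
/- If δ is a countable ordinal, k ∈ ω, and X = {γ < δ : g(γ) ≠ k} where g : δ → ω is continuous (order topology) and rank(X, δ) = rank(δ, δ) ≥ ξ₁ > 0, then for every η < δ with g''[η, δ) avoiding finitely many prescribed values, and every ξ₀ < ξ₁, there exists γ ∈ [η, δ) with g(γ) ≠ k and rank(γ, γ) ≥ ξ₀. -/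
noncomputable section

open Set

theorem rankGE_zero (X : Set Ordinal) (δ : Ordinal) : rankGE X δ 0 := by
  rw [rankGE]
  intro η hη
  exact absurd hη (not_lt_of_ge (zero_le (a := η)))

theorem rankGE_mono_mu {X : Set Ordinal} {δ : Ordinal} {μ μ' : Ordinal}
    (hle : μ' ≤ μ) (h : rankGE X δ μ) : rankGE X δ μ' := by
  rw [rankGE] at h ⊢
  intro η hη
  exact h η (hη.trans_le hle)

theorem rankGE_lift.{u, v, w} : ∀ (μ : Ordinal.{u}) (X : Set Ordinal.{w}) (δ : Ordinal.{w}),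
    rankGE X δ (Ordinal.lift.{v} μ) ↔ rankGE X δ μ := by
  intro μ
  induction μ using Ordinal.induction with
  | h μ IH =>
    intro X δ
    constructor
    · intro h
      rw [rankGE] at h ⊢
      intro η hη
      obtain ⟨h0, h1⟩ := h (Ordinal.lift.{v} η) (Ordinal.lift_lt.mpr hη)
      refine ⟨fun he => h0 (by rw [he, Ordinal.lift_zero]), fun hne β hβ => ?_⟩
      have hne' : Ordinal.lift.{v} η ≠ 0 := by
        rw [← Ordinal.lift_zero.{u, v}]
        exact fun hc => hne (Ordinal.lift_inj.mp hc)
      obtain ⟨ε, h₁, h₂, h₃⟩ := h1 hne' β hβ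
      exact ⟨ε, h₁, h₂, (IH η hη X ε).mp h₃⟩
    · intro h
      rw [rankGE] at h ⊢
      intro η' hη'
      obtain ⟨η, hη, rfl⟩ := Ordinal.lt_lift_iff.mp hη'
      obtain ⟨h0, h1⟩ := h η hη
      refine ⟨fun he => h0 (Ordinal.lift_inj.mp (by rw [he, Ordinal.lift_zero])),
        fun hne β hβ => ?_⟩
      have hne' : η ≠ 0 := fun hc => hne (by rw [hc, Ordinal.lift_zero])
      obtain ⟨ε, h₁, h₂, h₃⟩ := h1 hne' β hβ
      exact ⟨ε, h₁, h₂, (IH η hη X ε).mpr h₃⟩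

theorem rankGE_congr.{u, v, w} {X : Set Ordinal.{w}} {δ : Ordinal.{w}} {μ : Ordinal.{u}}
    {μ' : Ordinal.{v}} (h : Ordinal.lift.{v} μ = Ordinal.lift.{u} μ') :
    rankGE X δ μ ↔ rankGE X δ μ' := by
  constructor
  · intro hr
    have h2 := (rankGE_lift μ X δ).mpr hr
    rw [h] at h2
    exact (rankGE_lift μ' X δ).mp h2
  · intro hr
    have h2 := (rankGE_lift μ' X δ).mpr hr
    rw [← h] at h2
    exact (rankGE_lift μ X δ).mp h2

theorem rank_bound.{u, v} : ∀ (μ : Ordinal.{v}) (X : Set Ordinal.{u}) (δ : Ordinal.{u}),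
    0 < δ → rankGE X δ μ → Ordinal.lift.{u} μ ≤ Ordinal.lift.{v} δ + 1 := by
  intro μ
  induction μ using Ordinal.induction with
  | h μ IH =>
    intro X δ hδ h
    by_contra hc
    push_neg at hc
    obtain ⟨η, hη, hlη⟩ := Ordinal.lt_lift_iff.mp hc
    have hηne : η ≠ 0 := by
      intro h0
      rw [h0, Ordinal.lift_zero] at hlη
      exact (Ordinal.succ_ne_zero _) hlη.symm
    rw [rankGE] at h
    have h1 := (h η hη).2 hηne
    rcases eq_or_lt_of_le (Order.one_le_iff_pos.mpr hδ) with h1δ | h1δ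
    · obtain ⟨ε, hε0, hε1, -⟩ := h1 0 hδ
      rw [← h1δ] at hε1
      exact absurd (Ordinal.lt_one_iff_zero.mp hε1) (ne_of_gt hε0)
    · obtain ⟨ε, hε1, hεδ, hr⟩ := h1 1 h1δ
      have hεpos : 0 < ε := lt_trans zero_lt_one hε1
      have hb := IH η hη X ε hεpos hr
      have : Ordinal.lift.{u} η ≤ Ordinal.lift.{v} δ := by
        calc Ordinal.lift.{u} η ≤ Ordinal.lift.{v} ε + 1 := hb
        _ ≤ Ordinal.lift.{v} δ := by
            rw [Ordinal.add_one_eq_succ]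
            exact Order.succ_le_of_lt (Ordinal.lift_lt.mpr hεδ)
      rw [hlη] at this
      exact absurd this (not_le.mpr (lt_add_one _))

theorem omega1_lift.{u, v} : Ordinal.lift.{v} omega1.{u} = omega1.{max u v} := by
  rw [omega1, omega1, Cardinal.lift_ord, Cardinal.lift_aleph, Ordinal.lift_one]

theorem exists_copy.{u, v, w} {δ : Ordinal.{u}} (hδ : δ < omega1.{u}) {ξ : Ordinal.{v}}
    (hb : Ordinal.lift.{u} ξ ≤ Ordinal.lift.{v} δ + 1) :
    ∃ ν : Ordinal.{w}, Ordinal.lift.{v} ν = Ordinal.lift.{w} ξ := by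
  have h1 : Ordinal.lift.{u} ξ < omega1.{max u v} := by
    refine lt_of_le_of_lt hb ?_
    have hδ' : Ordinal.lift.{v} δ < omega1.{max u v} := by
      rw [← omega1_lift.{u, v}]
      exact Ordinal.lift_lt.mpr hδ
    rw [Ordinal.add_one_eq_succ]
    exact (Cardinal.isSuccLimit_ord (Cardinal.aleph0_le_aleph 1)).succ_lt hδ'
  have h3 := Ordinal.lift_lt.{w, max u v}.mpr h1
  rw [Ordinal.lift_lift, omega1_lift] at h3
  have h2 : Ordinal.lift.{w} ξ < Ordinal.lift.{v} omega1.{w} := by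
    refine Ordinal.lift_lt.{u, max v w}.mp ?_
    rw [Ordinal.lift_lift, Ordinal.lift_lift, omega1_lift]
    exact h3
  exact Ordinal.mem_range_lift_of_le h2.le

theorem rank_transfer.{u, v, w} {X Y : Set Ordinal.{u}} {δ : Ordinal.{u}}
    (hδ : δ < omega1.{u}) (hrk : ∀ μ : Ordinal.{w}, rankGE X δ μ ↔ rankGE Y δ μ)
    {ξ : Ordinal.{v}} (hb : Ordinal.lift.{u} ξ ≤ Ordinal.lift.{v} δ + 1)
    (h : rankGE Y δ ξ) : rankGE X δ ξ := by
  obtain ⟨ν, hν⟩ := exists_copy.{u, v, w} hδ hb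
  exact (rankGE_congr hν).mp ((hrk ν).mpr ((rankGE_congr hν.symm).mp h))

theorem rankGE_mono : ∀ (μ : Ordinal) (X Y : Set Ordinal) (ε : Ordinal),
    (∀ x ∈ X, x < ε → x ∈ Y) → rankGE X ε μ → rankGE Y ε μ := by
  intro μ
  induction μ using Ordinal.induction with
  | h μ IH =>
    intro X Y ε hsub hr
    rw [rankGE] at hr ⊢
    intro η hη
    obtain ⟨h0, h1⟩ := hr η hη
    refine ⟨fun he => ?_, fun hne β hβ => ?_⟩
    · intro β hβ
      obtain ⟨x, hx, hβx, hxε⟩ := h0 he β hβ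
      exact ⟨x, hsub x hx hxε, hβx, hxε⟩
    · obtain ⟨ε', hβε', hε', hr'⟩ := h1 hne β hβ
      exact ⟨ε', hβε', hε', IH η hη X Y ε' (fun x hx hxε => hsub x hx (hxε.trans hε')) hr'⟩

/-- if `X = {γ < δ : g γ ≠ k}` has the same rank at `δ` as `δ` itself,
`rank(δ, δ) ≥ ξ₁ > 0`, and `g` avoids the finitely many values in `S` on `[η, δ)`,
then for every `ξ₀ < ξ₁` there is `γ ∈ [η, δ)` with `g γ ≠ k` and `rank(γ, γ) ≥ ξ₀`. -/
theorem stmt10 (δ : Ordinal) (hδ : δ < omega1) (g : Set.Iio δ → ℕ) (hg : Continuous g)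
    (k : ℕ) (X : Set Ordinal) (hX : X = {γ | ∃ h : γ < δ, g ⟨γ, h⟩ ≠ k})
    (ξ₁ : Ordinal) (hξ₁ : 0 < ξ₁)
    (hrk : ∀ μ, rankGE X δ μ ↔ rankGE (Set.Iio δ) δ μ)
    (hge : rankGE (Set.Iio δ) δ ξ₁)
    (η : Ordinal) (hη : η < δ) (S : Finset ℕ)
    (havoid : ∀ γ, ∀ h : γ < δ, η ≤ γ → g ⟨γ, h⟩ ∉ S)
    (ξ₀ : Ordinal) (hξ₀ : ξ₀ < ξ₁) :
    ∃ γ, ∃ h : γ < δ, η ≤ γ ∧ g ⟨γ, h⟩ ≠ k ∧ rankGE (Set.Iio γ) γ ξ₀ := by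
  have hδpos : 0 < δ := lt_of_le_of_lt (zero_le (a := η)) hη
  rcases eq_or_ne ξ₀ 0 with rfl | hne
  · -- ξ₀ = 0 : rank condition is vacuous; just need a point of X above η
    have h1 : rankGE (Set.Iio δ) δ (1 : Ordinal) := by
      rw [rankGE]
      intro μ hμ
      have hμ0 : μ = 0 := Ordinal.lt_one_iff_zero.mp hμ
      refine ⟨fun _ => ?_, fun hne => absurd hμ0 hne⟩
      have := hge
      rw [rankGE] at this
      exact (this 0 hξ₁).1 rfl
    have hX1 : rankGE X δ (1 : Ordinal) := (hrk 1).mpr h1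
    rw [rankGE] at hX1
    obtain ⟨ε, hεX, hηε, hεδ⟩ := (hX1 0 zero_lt_one).1 rfl η hη
    rw [hX] at hεX
    obtain ⟨hεδ', hgε⟩ := hεX
    exact ⟨ε, hεδ', hηε.le, hgε, rankGE_zero _ _⟩
  · -- ξ₀ ≠ 0 : transfer ranks through universes via lifts
    have hξ₂le : ξ₀ + 1 ≤ ξ₁ := by
      rw [Ordinal.add_one_eq_succ]
      exact Order.succ_le_of_lt hξ₀
    have hge₂ : rankGE (Set.Iio δ) δ (ξ₀ + 1) := rankGE_mono_mu hξ₂le hge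
    -- ξ₀ + 1 is (after lifting) below ω₁, hence has a copy in hrk's universe
    have hbd : Ordinal.lift (ξ₀ + 1) ≤ Ordinal.lift δ + 1 :=
      rank_bound (ξ₀ + 1) (Set.Iio δ) δ hδpos hge₂
    have hrkX₂ : rankGE X δ (ξ₀ + 1) := rank_transfer hδ hrk hbd hge₂
    rw [rankGE] at hrkX₂
    obtain ⟨ε, hηε, hεδ, hrε⟩ := (hrkX₂ ξ₀ (lt_add_one ξ₀)).2 hne η hη
    have hξ₀pos : 0 < ξ₀ := pos_iff_ne_zero.mpr hne
    -- ε is a limit point of X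
    have hlim : IsLimitPointOf X ε := by
      rw [rankGE] at hrε
      exact (hrε 0 hξ₀pos).1 rfl
    -- g ε ≠ k : otherwise by continuity X-points near ε would map to k
    have hgε : g ⟨ε, hεδ⟩ ≠ k := by
      intro hk
      -- ε is in the closure of X
      have hcl : ε ∈ closure X := by
        have hεpos : 0 < ε := lt_of_le_of_lt (zero_le (a := η)) hηε
        obtain ⟨x₀, hx₀X, _, hx₀ε⟩ := hlim 0 hεpos
        have hne' : (X ∩ Set.Iic ε).Nonempty := ⟨x₀, hx₀X, hx₀ε.le⟩
        have hlub : IsLUB (X ∩ Set.Iic ε) ε := by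
          constructor
          · intro x hx; exact hx.2
          · intro b hb
            by_contra hbε
            push_neg at hbε
            obtain ⟨x, hxX, hbx, hxε⟩ := hlim b hbε
            exact absurd (hb ⟨hxX, hxε.le⟩) (not_le.mpr hbx)
        have := (Ordinal.mem_closure_tfae ε X).out 2 0
        exact this.mp ⟨hne', hlub.csSup_eq hne'⟩
      -- transfer into the subtype
      set A : Set (Set.Iio δ) := {x | (x : Ordinal) ∈ X} with hA
      have hclA : (⟨ε, hεδ⟩ : Set.Iio δ) ∈ closure A := by
        rw [closure_subtype]
        refine closure_mono ?_ hcl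
        intro x hx
        have hxδ : x < δ := by rw [hX] at hx; exact hx.1
        exact ⟨⟨x, hxδ⟩, hx, rfl⟩
      -- g⁻¹ {k} is an open neighborhood of ε
      have hopen : IsOpen (g ⁻¹' {k}) := hg.isOpen_preimage _ (isOpen_discrete _)
      have hmem : (⟨ε, hεδ⟩ : Set.Iio δ) ∈ g ⁻¹' {k} := hk
      obtain ⟨x, hxU, hxA⟩ := mem_closure_iff.mp hclA _ hopen hmem
      have hxX : (x : Ordinal) ∈ X := hxA
      rw [hX] at hxX
      obtain ⟨hxδ, hgx⟩ := hxX
      apply hgx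
      have : (⟨(x : Ordinal), hxδ⟩ : Set.Iio δ) = x := Subtype.ext rfl
      rw [this]
      exact hxU
    exact ⟨ε, hεδ, hηε.le, hgε,
      rankGE_mono ξ₀ X (Set.Iio ε) ε (fun x _ hx => hx) hrε⟩
end
end
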